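/- Let Ω ⊆ ℝ^d be a bounded open set, L the normalized Lebesgue measure on Ω, and f, g ∈ L^1(L; ℝ^m), at least one of which is Lipschitz with Lipschitz constant κ. Then for every λ ∈ (0, 1/κ), d_{TL^1_λ}((f,L),(g,L)) = ‖f−g‖_{L^1(L)}. -/

import Mathlib

open MeasureTheory Filter

noncomputable section

/-- `lpPow p x y = |x - y|_p^p = ∑ i, |x i - y i|^p`, the p-th power of the ℓ^p
distance between `x` and `y` in Euclidean space. -/
def lpPow (p : ℝ) {n : ℕ} (x y : Fin n → ℝ) : ℝ := ∑ i, |x i - y i| ^ p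

/-- `Couplings μ ν` is the set of (probability) measures on the product whose first
marginal is `μ` and second marginal is `ν`. -/
def Couplings {α β : Type*} [MeasurableSpace α] [MeasurableSpace β]
    (μ : Measure α) (ν : Measure β) : Set (Measure (α × β)) :=
  {π | π.fst = μ ∧ π.snd = ν}

/-- The p-th power of the `TL^p_λ` distance:
`inf_{π ∈ Π(μ,ν)} ∫ (1/λ)|x-y|_p^p + |f(x)-g(y)|_p^p dπ`. -/
def TLpPow {d m : ℕ} (p lam : ℝ) (f g : (Fin d → ℝ) → (Fin m → ℝ))
    (μ ν : Measure (Fin d → ℝ)) : ℝ :=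
  sInf {r : ℝ | ∃ π ∈ Couplings μ ν,
    r = ∫ z : (Fin d → ℝ) × (Fin d → ℝ),
      ((1 / lam) * lpPow p z.1 z.2 + lpPow p (f z.1) (g z.2)) ∂π}

/-- The `TL^p_λ` distance. -/
def TLpDist {d m : ℕ} (p lam : ℝ) (f g : (Fin d → ℝ) → (Fin m → ℝ))
    (μ ν : Measure (Fin d → ℝ)) : ℝ := TLpPow p lam f g μ ν ^ (1 / p)

/-- The normalized Lebesgue measure on `Ω`. -/
def nLeb {d : ℕ} (Ω : Set (Fin d → ℝ)) : Measure (Fin d → ℝ) :=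
  (volume Ω)⁻¹ • volume.restrict Ω

lemma lpPow_one {n : ℕ} (x y : Fin n → ℝ) : lpPow 1 x y = ∑ i, |x i - y i| := by
  simp [lpPow, Real.rpow_one]

lemma lpPow_one_nonneg {n : ℕ} (x y : Fin n → ℝ) : 0 ≤ lpPow 1 x y := by
  rw [lpPow_one]; exact Finset.sum_nonneg fun i _ => abs_nonneg _

lemma lpPow_one_self {n : ℕ} (x : Fin n → ℝ) : lpPow 1 x x = 0 := by
  simp [lpPow_one]

lemma lpPow_one_comm {n : ℕ} (x y : Fin n → ℝ) : lpPow 1 x y = lpPow 1 y x := by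
  simp only [lpPow_one]; exact Finset.sum_congr rfl fun i _ => abs_sub_comm _ _

lemma lpPow_one_triangle {n : ℕ} (x y z : Fin n → ℝ) :
    lpPow 1 x z ≤ lpPow 1 x y + lpPow 1 y z := by
  simp only [lpPow_one, ← Finset.sum_add_distrib]
  exact Finset.sum_le_sum fun i _ => abs_sub_le _ _ _

lemma lpPow_one_measurable {n : ℕ} :
    Measurable (fun z : (Fin n → ℝ) × (Fin n → ℝ) => lpPow 1 z.1 z.2) := by
  simp only [lpPow_one]
  exact Finset.measurable_sum _ fun i _ =>
    ((measurable_pi_apply i).comp measurable_fst).sub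
      ((measurable_pi_apply i).comp measurable_snd) |>.abs

/-- For `p = 1`, if at least one of `f`, `g` is Lipschitz with constant `κ` (with respect
to the ℓ¹ norms), then for every `λ ∈ (0, 1/κ)` the `TL¹_λ` distance equals the `L¹`
distance: `d_{TL¹_λ}((f,L),(g,L)) = ‖f−g‖_{L¹(L)}`. -/
theorem tl1_eq_L1_of_small_lambda
    {d m : ℕ}
    (Ω : Set (Fin d → ℝ)) (hΩo : IsOpen Ω) (hΩb : Bornology.IsBounded Ω)
    (hΩne : Ω.Nonempty)
    (f g : (Fin d → ℝ) → (Fin m → ℝ))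
    (hf : Measurable f) (hg : Measurable g)
    (hfp : Integrable (fun x => lpPow 1 (f x) 0) (nLeb Ω))
    (hgp : Integrable (fun x => lpPow 1 (g x) 0) (nLeb Ω))
    (κ : ℝ) (hκ : 0 ≤ κ)
    (hLip : (∀ x y, lpPow 1 (f x) (f y) ≤ κ * lpPow 1 x y) ∨
            (∀ x y, lpPow 1 (g x) (g y) ≤ κ * lpPow 1 x y))
    (lam : ℝ) (hlam : 0 < lam) (hlamκ : lam * κ < 1) :
    TLpPow 1 lam f g (nLeb Ω) (nLeb Ω) = ∫ x, lpPow 1 (f x) (g x) ∂(nLeb Ω) := by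
  classical
  set μ := nLeb Ω with hμdef
  have hΩm : MeasurableSet Ω := hΩo.measurableSet
  have hvolpos : volume Ω ≠ 0 := (hΩo.measure_pos volume hΩne).ne'
  have hvoltop : volume Ω ≠ ⊤ := hΩb.measure_lt_top.ne
  have hprob : IsProbabilityMeasure μ := by
    constructor
    rw [hμdef, nLeb, Measure.smul_apply, Measure.restrict_apply MeasurableSet.univ,
      Set.univ_inter, smul_eq_mul, ENNReal.inv_mul_cancel hvolpos hvoltop]
  have hμcompl : μ Ωᶜ = 0 := by
    rw [hμdef, nLeb, Measure.smul_apply, Measure.restrict_apply hΩm.compl,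
      Set.compl_inter_self, measure_empty, smul_eq_mul, mul_zero]
  -- cost function
  set cost : (Fin d → ℝ) × (Fin d → ℝ) → ℝ :=
    fun z => (1 / lam) * lpPow 1 z.1 z.2 + lpPow 1 (f z.1) (g z.2) with hcostdef
  have hB_meas : Measurable (fun z : (Fin d → ℝ) × (Fin d → ℝ) => lpPow 1 (f z.1) (g z.2)) := by
    simp only [lpPow_one]
    refine Finset.measurable_sum _ fun i _ => Measurable.abs ?_
    exact ((measurable_pi_apply i).comp (hf.comp measurable_fst)).sub
      ((measurable_pi_apply i).comp (hg.comp measurable_snd))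
  have hcost_meas : Measurable cost := by
    apply Measurable.add
    · exact (lpPow_one_measurable).const_mul _
    · exact hB_meas
  have hκlam : κ ≤ 1 / lam := by
    rw [le_div_iff₀ hlam]; nlinarith
  have hcost_nonneg : ∀ z, 0 ≤ cost z := fun z => by
    have h1 := lpPow_one_nonneg z.1 z.2
    have h2 := lpPow_one_nonneg (f z.1) (g z.2)
    have : 0 ≤ 1 / lam := by positivity
    simp only [hcostdef]; nlinarith
  -- integrability of x ↦ |f x - g x|
  have hfg_meas : Measurable fun x => lpPow 1 (f x) (g x) := by
    simp only [lpPow_one]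
    refine Finset.measurable_sum _ fun i _ => Measurable.abs ?_
    exact ((measurable_pi_apply i).comp hf).sub ((measurable_pi_apply i).comp hg)
  have hfg : Integrable (fun x => lpPow 1 (f x) (g x)) μ := by
    refine (hfp.add hgp).mono' hfg_meas.aestronglyMeasurable ?_
    filter_upwards with x
    rw [Real.norm_of_nonneg (lpPow_one_nonneg _ _)]
    calc lpPow 1 (f x) (g x) ≤ lpPow 1 (f x) 0 + lpPow 1 0 (g x) := lpPow_one_triangle _ _ _
      _ = lpPow 1 (f x) 0 + lpPow 1 (g x) 0 := by rw [lpPow_one_comm 0]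
  set I : ℝ := ∫ x, lpPow 1 (f x) (g x) ∂μ with hIdef
  -- bound on Ω
  obtain ⟨C, hC⟩ := isBounded_iff_forall_norm_le.mp hΩb
  -- the identity coupling realizes I
  have hImem : I ∈ {r : ℝ | ∃ π ∈ Couplings μ μ, r = ∫ z, cost z ∂π} := by
    have hdiag : Measurable (fun x : Fin d → ℝ => (x, x)) :=
      measurable_id.prodMk measurable_id
    refine ⟨μ.map (fun x => (x, x)), ⟨?_, ?_⟩, ?_⟩
    · rw [Measure.fst, Measure.map_map measurable_fst hdiag]
      exact Measure.map_id'
    · rw [Measure.snd, Measure.map_map measurable_snd hdiag]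
      exact Measure.map_id'
    · rw [integral_map hdiag.aemeasurable hcost_meas.aestronglyMeasurable]
      simp [hcostdef, lpPow_one_self, hIdef]
  -- lower bound
  have hlower : ∀ r ∈ {r : ℝ | ∃ π ∈ Couplings μ μ, r = ∫ z, cost z ∂π}, I ≤ r := by
    rintro r ⟨π, ⟨hπ1, hπ2⟩, rfl⟩
    have hπfin : IsProbabilityMeasure π := by
      constructor
      have : π.fst Set.univ = 1 := by rw [hπ1]; exact measure_univ
      rwa [Measure.fst_apply MeasurableSet.univ, Set.preimage_univ] at this
    have haefst : ∀ᵐ z ∂π, z.1 ∈ Ω := by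
      have h0 : π.fst Ωᶜ = 0 := by rw [hπ1]; exact hμcompl
      rw [Measure.fst_apply hΩm.compl] at h0
      rw [ae_iff]
      exact h0
    have haesnd : ∀ᵐ z ∂π, z.2 ∈ Ω := by
      have h0 : π.snd Ωᶜ = 0 := by rw [hπ2]; exact hμcompl
      rw [Measure.snd_apply hΩm.compl] at h0
      rw [ae_iff]
      exact h0
    -- integrability of the distance term
    have hA : Integrable (fun z : (Fin d → ℝ) × (Fin d → ℝ) => lpPow 1 z.1 z.2) π := by
      refine (integrable_const (d * (2 * C))).mono'
        lpPow_one_measurable.aestronglyMeasurable ?_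
      filter_upwards [haefst, haesnd] with z h1 h2
      rw [Real.norm_of_nonneg (lpPow_one_nonneg _ _), lpPow_one]
      calc ∑ i, |z.1 i - z.2 i| ≤ ∑ _i : Fin d, 2 * C := by
            refine Finset.sum_le_sum fun i _ => ?_
            have b1 : |z.1 i| ≤ C := le_trans (norm_le_pi_norm z.1 i) (hC _ h1)
            have b2 : |z.2 i| ≤ C := le_trans (norm_le_pi_norm z.2 i) (hC _ h2)
            calc |z.1 i - z.2 i| ≤ |z.1 i| + |z.2 i| := abs_sub _ _
              _ ≤ 2 * C := by linarith
        _ = d * (2 * C) := by simp [mul_comm]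
    -- integrability of marginal compositions
    have hfstcomp : ∀ (F : (Fin d → ℝ) → ℝ), Measurable F → Integrable F μ →
        Integrable (fun z : (Fin d → ℝ) × (Fin d → ℝ) => F z.1) π := by
      intro F hFm hFi
      have : Integrable F (π.map Prod.fst) := by rwa [← Measure.fst, hπ1]
      exact (integrable_map_measure hFm.aestronglyMeasurable measurable_fst.aemeasurable).mp this
    have hsndcomp : ∀ (F : (Fin d → ℝ) → ℝ), Measurable F → Integrable F μ →
        Integrable (fun z : (Fin d → ℝ) × (Fin d → ℝ) => F z.2) π := by
      intro F hFm hFi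
      have : Integrable F (π.map Prod.snd) := by rwa [← Measure.snd, hπ2]
      exact (integrable_map_measure hFm.aestronglyMeasurable measurable_snd.aemeasurable).mp this
    have hf0_meas : Measurable fun x => lpPow 1 (f x) 0 := by
      simp only [lpPow_one]
      refine Finset.measurable_sum _ fun i _ => Measurable.abs ?_
      exact ((measurable_pi_apply i).comp hf).sub measurable_const
    have hg0_meas : Measurable fun x => lpPow 1 (g x) 0 := by
      simp only [lpPow_one]
      refine Finset.measurable_sum _ fun i _ => Measurable.abs ?_
      exact ((measurable_pi_apply i).comp hg).sub measurable_const
    have hFfst : Integrable (fun z : (Fin d → ℝ) × (Fin d → ℝ) => lpPow 1 (f z.1) 0) π :=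
      hfstcomp _ hf0_meas hfp
    have hGsnd : Integrable (fun z : (Fin d → ℝ) × (Fin d → ℝ) => lpPow 1 (g z.2) 0) π :=
      hsndcomp _ hg0_meas hgp
    have hB : Integrable (fun z : (Fin d → ℝ) × (Fin d → ℝ) => lpPow 1 (f z.1) (g z.2)) π := by
      refine (hFfst.add hGsnd).mono' hB_meas.aestronglyMeasurable ?_
      filter_upwards with z
      rw [Real.norm_of_nonneg (lpPow_one_nonneg _ _)]
      calc lpPow 1 (f z.1) (g z.2) ≤ lpPow 1 (f z.1) 0 + lpPow 1 0 (g z.2) :=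
            lpPow_one_triangle _ _ _
        _ = lpPow 1 (f z.1) 0 + lpPow 1 (g z.2) 0 := by rw [lpPow_one_comm 0]
    have hcost_int : Integrable cost π := (hA.const_mul _).add hB
    rcases hLip with hL | hL
    · -- f Lipschitz: cost z ≥ lpPow 1 (f z.2) (g z.2)
      have hpt : ∀ z : (Fin d → ℝ) × (Fin d → ℝ), lpPow 1 (f z.2) (g z.2) ≤ cost z := by
        intro z
        have t1 : lpPow 1 (f z.2) (g z.2) ≤ lpPow 1 (f z.2) (f z.1) + lpPow 1 (f z.1) (g z.2) :=
          lpPow_one_triangle _ _ _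
        have t2 : lpPow 1 (f z.2) (f z.1) ≤ κ * lpPow 1 z.2 z.1 := hL _ _
        have t3 : lpPow 1 z.2 z.1 = lpPow 1 z.1 z.2 := lpPow_one_comm _ _
        have t4 : κ * lpPow 1 z.1 z.2 ≤ (1 / lam) * lpPow 1 z.1 z.2 :=
          mul_le_mul_of_nonneg_right hκlam (lpPow_one_nonneg _ _)
        simp only [hcostdef]
        nlinarith [lpPow_one_nonneg z.1 z.2]
      have hsnd_int : Integrable (fun z : (Fin d → ℝ) × (Fin d → ℝ) =>
          lpPow 1 (f z.2) (g z.2)) π := hsndcomp _ hfg_meas hfg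
      have : I = ∫ z, lpPow 1 (f z.2) (g z.2) ∂π := by
        rw [hIdef, ← hπ2, Measure.snd,
          integral_map measurable_snd.aemeasurable hfg_meas.aestronglyMeasurable]
      rw [this]
      exact integral_mono hsnd_int hcost_int hpt
    · -- g Lipschitz: cost z ≥ lpPow 1 (f z.1) (g z.1)
      have hpt : ∀ z : (Fin d → ℝ) × (Fin d → ℝ), lpPow 1 (f z.1) (g z.1) ≤ cost z := by
        intro z
        have t1 : lpPow 1 (f z.1) (g z.1) ≤ lpPow 1 (f z.1) (g z.2) + lpPow 1 (g z.2) (g z.1) :=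
          lpPow_one_triangle _ _ _
        have t2 : lpPow 1 (g z.2) (g z.1) ≤ κ * lpPow 1 z.2 z.1 := hL _ _
        have t3 : lpPow 1 z.2 z.1 = lpPow 1 z.1 z.2 := lpPow_one_comm _ _
        have t4 : κ * lpPow 1 z.1 z.2 ≤ (1 / lam) * lpPow 1 z.1 z.2 :=
          mul_le_mul_of_nonneg_right hκlam (lpPow_one_nonneg _ _)
        simp only [hcostdef]
        nlinarith [lpPow_one_nonneg z.1 z.2]
      have hfst_int : Integrable (fun z : (Fin d → ℝ) × (Fin d → ℝ) =>
          lpPow 1 (f z.1) (g z.1)) π := hfstcomp _ hfg_meas hfg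
      have : I = ∫ z, lpPow 1 (f z.1) (g z.1) ∂π := by
        rw [hIdef, ← hπ1, Measure.fst,
          integral_map measurable_fst.aemeasurable hfg_meas.aestronglyMeasurable]
      rw [this]
      exact integral_mono hfst_int hcost_int hpt
  exact IsLeast.csInf_eq ⟨hImem, hlower⟩
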